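/- Let m ≥ 1 be an integer and let h/k be a fraction in lowest terms belonging to F(B(2m),m) with 1/2 ≤ h/k < 1/1. Let x₀ be the integer satisfying k·x₀ ≡ 1 (mod h) and m−h+1 ≤ x₀ ≤ m. Then the fraction x₀ / ((k·x₀−1)/h) is the successor of h/k in F(B(2m),m). In particular, the fraction m/(2m−1) is the successor of 1/2 in F(B(2m),m). -/

import Mathlib

/-- The Farey sequence `F_n` of order `n`, viewed as the set of rationals `q`
with `0 ≤ q ≤ 1` whose lowest-terms denominator is at most `n`. -/
def Farey (n : ℕ) : Set ℚ :=
  {q : ℚ | 0 ≤ q ∧ q ≤ 1 ∧ q.den ≤ n}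

/-- The Farey subsequence `F(B(n),m)`: fractions `h/k ∈ F_n` in lowest terms
with `h ≤ m` and `k - h ≤ n - m`. -/
def FareyB (n m : ℕ) : Set ℚ :=
  {q : ℚ | 0 ≤ q ∧ q ≤ 1 ∧ q.den ≤ n ∧ q.num ≤ (m : ℤ) ∧
    (q.den : ℤ) - q.num ≤ (n : ℤ) - (m : ℤ)}

/-- `f'` is the predecessor of `f` in the set `S` of rationals. -/
def IsPredIn (S : Set ℚ) (f' f : ℚ) : Prop :=
  f' ∈ S ∧ f ∈ S ∧ f' < f ∧ ∀ g ∈ S, ¬(f' < g ∧ g < f)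

/-- `f'` is the successor of `f` in the set `S` of rationals. -/
def IsSuccIn (S : Set ℚ) (f f' : ℚ) : Prop :=
  f ∈ S ∧ f' ∈ S ∧ f < f' ∧ ∀ g ∈ S, ¬(f < g ∧ g < f')

lemma aux_main (m : ℕ) (hm : 1 ≤ m) (h k : ℤ) (hk : 0 < k) (hg : Int.gcd h k = 1)
    (hmem : (h : ℚ) / (k : ℚ) ∈ FareyB (2 * m) m)
    (h1 : 1 / 2 ≤ (h : ℚ) / (k : ℚ)) (h2 : (h : ℚ) / (k : ℚ) < 1)
    (x₀ : ℤ) (hx : k * x₀ ≡ 1 [ZMOD h])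
    (hx1 : (m : ℤ) - h + 1 ≤ x₀) (hx2 : x₀ ≤ (m : ℤ)) :
    IsSuccIn (FareyB (2 * m) m) ((h : ℚ) / (k : ℚ))
      ((x₀ : ℚ) / (((k * x₀ - 1 : ℤ) : ℚ) / (h : ℚ))) := by
  have hkQ : (0:ℚ) < (k:ℚ) := by exact_mod_cast hk
  -- basic integer facts about h, k
  have hpos : 0 < h := by
    by_contra hc
    push_neg at hc
    have : (h:ℚ) ≤ 0 := by exact_mod_cast hc
    have : (h:ℚ)/(k:ℚ) ≤ 0 := div_nonpos_of_nonpos_of_nonneg this hkQ.le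
    linarith
  have hhQ : (0:ℚ) < (h:ℚ) := by exact_mod_cast hpos
  have hk2h : k ≤ 2 * h := by
    rw [div_le_div_iff₀ (by norm_num) hkQ] at h1
    have : (k:ℚ) ≤ 2*(h:ℚ) := by linarith
    exact_mod_cast this
  have hhk : h < k := by
    rw [div_lt_one hkQ] at h2
    exact_mod_cast h2
  -- h ≤ m from membership
  have hnum : ((h:ℚ)/(k:ℚ)).num = h :=
    Rat.num_div_eq_of_coprime hk hg
  have hhm : h ≤ (m:ℤ) := by
    have := hmem.2.2.2.1
    rwa [hnum] at this
  -- define y₀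
  have hdvd : h ∣ k * x₀ - 1 := by
    have := Int.ModEq.dvd hx
    exact (dvd_sub_comm).mp this
  obtain ⟨y₀, hy⟩ := hdvd
  have hdet : k * x₀ - h * y₀ = 1 := by linarith
  have hx0pos : 1 ≤ x₀ := by linarith
  have hy0pos : 1 ≤ y₀ := by nlinarith
  have hxy : x₀ ≤ y₀ := by nlinarith
  have hy2m : y₀ ≤ 2 * (m:ℤ) := by nlinarith
  have hymx : y₀ - x₀ ≤ (m:ℤ) := by nlinarith
  have hgxy : Int.gcd x₀ y₀ = 1 :=
    Int.isCoprime_iff_gcd_eq_one.mp ⟨k, -h, by linarith⟩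
  have hy0Q : (0:ℚ) < (y₀:ℚ) := by exact_mod_cast hy0pos
  -- rewrite f'
  have hf' : ((k * x₀ - 1 : ℤ) : ℚ) / (h : ℚ) = (y₀:ℚ) := by
    rw [hy]
    push_cast
    field_simp
  rw [hf']
  have hnum' : ((x₀:ℚ)/(y₀:ℚ)).num = x₀ :=
    Rat.num_div_eq_of_coprime (by exact_mod_cast hy0pos) hgxy
  have hden' : (((x₀:ℚ)/(y₀:ℚ)).den : ℤ) = y₀ :=
    Rat.den_div_eq_of_coprime (by exact_mod_cast hy0pos) hgxy
  refine ⟨hmem, ?_, ?_, ?_⟩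
  · refine ⟨by positivity, ?_, ?_, ?_, ?_⟩
    · rw [div_le_one hy0Q]; exact_mod_cast hxy
    · have : (((x₀:ℚ)/(y₀:ℚ)).den : ℤ) ≤ (2*m : ℤ) := by rw [hden']; exact_mod_cast hy2m
      exact_mod_cast this
    · rw [hnum']; exact hx2
    · rw [hnum', hden']; push_cast; linarith
  · rw [div_lt_div_iff₀ hkQ hy0Q]
    have : h * y₀ < x₀ * k := by linarith
    exact_mod_cast this
  · rintro g ⟨hg0, hg1, hgden, hgnum, hgdiff⟩ ⟨hl1, hl2⟩
    set a := g.num with ha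
    have hb0 : (0:ℤ) < (g.den : ℤ) := by exact_mod_cast g.pos
    have hbQ : (0:ℚ) < ((g.den:ℤ):ℚ) := by exact_mod_cast hb0
    have hgeq : g = ((a:ℚ))/((g.den:ℤ):ℚ) := by
      push_cast
      exact (Rat.num_div_den g).symm
    rw [hgeq] at hl1 hl2
    rw [div_lt_div_iff₀ hkQ hbQ] at hl1
    rw [div_lt_div_iff₀ hbQ hy0Q] at hl2
    have hl1' : h * (g.den:ℤ) < a * k := by exact_mod_cast hl1
    have hl2' : a * y₀ < x₀ * (g.den:ℤ) := by exact_mod_cast hl2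
    have hlam : 1 ≤ a * k - h * (g.den:ℤ) := by linarith
    have hmu : 1 ≤ x₀ * (g.den:ℤ) - a * y₀ := by linarith
    have key : a = (a * k - h * (g.den:ℤ)) * x₀ + (x₀ * (g.den:ℤ) - a * y₀) * h := by
      have : (a * k - h * (g.den:ℤ)) * x₀ + (x₀ * (g.den:ℤ) - a * y₀) * h
          = a * (k * x₀ - h * y₀) := by ring
      rw [this, hdet, mul_one]
    have : (m:ℤ) < a := by nlinarith
    linarith [hgnum]

/-- Successor formula in `F(B(2m),m)` for fractions `1/2 ≤ h/k < 1`; in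
particular, `m/(2m-1)` is the successor of `1/2`. -/
theorem stmt_11 (m : ℕ) (hm : 1 ≤ m) :
    (∀ h k : ℤ, 0 < k → Int.gcd h k = 1 →
      (h : ℚ) / (k : ℚ) ∈ FareyB (2 * m) m →
      1 / 2 ≤ (h : ℚ) / (k : ℚ) → (h : ℚ) / (k : ℚ) < 1 →
      ∀ x₀ : ℤ, k * x₀ ≡ 1 [ZMOD h] →
        (m : ℤ) - h + 1 ≤ x₀ → x₀ ≤ (m : ℤ) →
        IsSuccIn (FareyB (2 * m) m) ((h : ℚ) / (k : ℚ))
          ((x₀ : ℚ) / (((k * x₀ - 1 : ℤ) : ℚ) / (h : ℚ)))) ∧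
    IsSuccIn (FareyB (2 * m) m) (1 / 2) ((m : ℚ) / (2 * (m : ℚ) - 1)) := by

  constructor
  · exact fun h k hk hg hmem h1 h2 x₀ hx hx1 hx2 =>
      aux_main m hm h k hk hg hmem h1 h2 x₀ hx hx1 hx2
  · have hmQ : (1:ℚ) ≤ (m:ℚ) := by exact_mod_cast hm
    have half : ((1:ℤ):ℚ)/((2:ℤ):ℚ) = (1:ℚ)/2 := by norm_num
    have hmem : ((1:ℤ):ℚ)/((2:ℤ):ℚ) ∈ FareyB (2*m) m := by
      rw [half]
      refine ⟨by norm_num, by norm_num, ?_, ?_, ?_⟩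
      · show ((1:ℚ)/2).den ≤ 2*m
        norm_num; omega
      · show ((1:ℚ)/2).num ≤ (m:ℤ)
        norm_num; exact_mod_cast hm
      · show (((1:ℚ)/2).den : ℤ) - ((1:ℚ)/2).num ≤ (2*m:ℤ) - m
        norm_num
        omega
    have key := aux_main m hm 1 2 (by norm_num) (by norm_num) hmem
      (by rw [half]) (by rw [half]; norm_num) (m:ℤ)
      (Int.modEq_one) (by omega) (le_refl _)
    have e1 : (((m:ℤ)):ℚ) / (((2 * (m:ℤ) - 1 : ℤ) : ℚ) / ((1:ℤ):ℚ))
        = (m:ℚ) / (2*(m:ℚ) - 1) := by push_cast; ring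
    rw [half] at key
    convert key using 2
    all_goals (push_cast; ring)
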